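/- Let ρ be a non-atomic Borel probability measure on [0,∞) with finite first moment, let ζ ∈ (0,1), let W : [0,1] → [0,∞) be bounded, continuous, and satisfy W(t) = 0 for all t ≥ ζ, and let R ≥ 0. Then the one-sided derivative at t = 0 of t ↦ Φ_W((1−t)ρ + t δ_R) exists, equals ∫_0^∞ W(F_ρ(r)) ( F_ρ(r) − 1_{[R,∞)}(r) ) dr, and is at most IF_max(ρ, W) = ∫_0^{F_ρ^{-1}(ζ)} W(F_ρ(r)) F_ρ(r) dr. In particular the influence function of Φ_W at ρ is bounded above uniformly in R by IF_max(ρ, W). -/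

import Mathlib

open MeasureTheory Set

/-- The cumulative distribution function `F_ρ(r) = ρ([0,r])`. -/
noncomputable def cdf (ρ : Measure ℝ) (r : ℝ) : ℝ := (ρ (Iic r)).toReal

/-- The quantile function `F_ρ⁻¹(ζ) = inf { r ≥ 0 : F_ρ(r) ≥ ζ }`. -/
noncomputable def quant (ρ : Measure ℝ) (ζ : ℝ) : ℝ := sInf {r : ℝ | 0 ≤ r ∧ ζ ≤ cdf ρ r}

/-- The robust functional `Φ_W(ρ) = ∫ r W(F_ρ(r)) dρ(r)`. -/
noncomputable def PhiW (W : ℝ → ℝ) (ρ : Measure ℝ) : ℝ := ∫ r, r * W (cdf ρ r) ∂ρ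

/-- The mixture `(1 - t) ρ + t δ_R`. -/
noncomputable def mix (ρ : Measure ℝ) (R t : ℝ) : Measure ℝ :=
  ENNReal.ofReal (1 - t) • ρ + ENNReal.ofReal t • Measure.dirac R


open Filter intervalIntegral
open scoped Topology ENNReal

set_option linter.unusedSectionVars false
set_option linter.unusedVariables false
set_option maxHeartbeats 1000000

noncomputable def Gfun (Wc : ℝ → ℝ) : ℝ → ℝ := fun u => ∫ s in (0:ℝ)..u, Wc s

section AuxCdf
variable (ρ : Measure ℝ) [IsProbabilityMeasure ρ] [NullSingletonClass ρ]

lemma cdf_nonneg (r : ℝ) : 0 ≤ cdf ρ r := ENNReal.toReal_nonneg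

lemma ofReal_cdf (r : ℝ) : ENNReal.ofReal (cdf ρ r) = ρ (Iic r) :=
  ENNReal.ofReal_toReal (measure_ne_top ρ _)

lemma cdf_le_one (r : ℝ) : cdf ρ r ≤ 1 := by
  have : ρ (Iic r) ≤ 1 := prob_le_one
  simpa [cdf] using ENNReal.toReal_mono ENNReal.one_ne_top this

lemma cdf_mono : Monotone (cdf ρ) := fun a b hab =>
  ENNReal.toReal_mono (measure_ne_top ρ _) (measure_mono (Iic_subset_Iic.2 hab))

lemma cdf_measurable : Measurable (cdf ρ) := (cdf_mono ρ).measurable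

lemma cdf_eq_probCdf : cdf ρ = ProbabilityTheory.cdf ρ := by
  funext r; rw [ProbabilityTheory.cdf_eq_real]; rfl

lemma cdf_tendsto_one : Tendsto (cdf ρ) atTop (𝓝 1) := by
  rw [cdf_eq_probCdf]; exact ProbabilityTheory.tendsto_cdf_atTop ρ

lemma cdf_continuous [NullSingletonClass ρ] : Continuous (cdf ρ) := by
  rw [cdf_eq_probCdf]
  rw [continuous_iff_continuousAt]
  intro x
  rw [(ProbabilityTheory.cdf ρ).mono.continuousAt_iff_leftLim_eq_rightLim]
  have hr : Function.rightLim (ProbabilityTheory.cdf ρ) x = ProbabilityTheory.cdf ρ x :=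
    StieltjesFunction.rightLim_eq _ _
  have hmeas : (ProbabilityTheory.cdf ρ).measure {x} = 0 := by
    rw [ProbabilityTheory.measure_cdf]; exact measure_singleton x
  rw [StieltjesFunction.measure_singleton] at hmeas
  have hle : Function.leftLim (ProbabilityTheory.cdf ρ) x ≤ ProbabilityTheory.cdf ρ x :=
    (ProbabilityTheory.cdf ρ).mono.leftLim_le le_rfl
  have : ProbabilityTheory.cdf ρ x - Function.leftLim (ProbabilityTheory.cdf ρ) x ≤ 0 := by
    by_contra h
    push_neg at h
    rw [ENNReal.ofReal_eq_zero] at hmeas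
    linarith
  rw [hr]
  linarith

lemma cdf_nonpos [NullSingletonClass ρ] (hsupp : ρ (Iio 0) = 0) {r : ℝ} (hr : r ≤ 0) : cdf ρ r = 0 := by
  have : ρ (Iic r) = 0 := by
    have h1 : ρ (Iic r) ≤ ρ (Iio 0) + ρ {0} := by
      refine le_trans (measure_mono ?_) (measure_union_le _ _)
      intro y hy
      rcases lt_or_eq_of_le (le_trans hy hr) with h | h
      · exact Or.inl h
      · exact Or.inr h
    simpa [hsupp, measure_singleton] using h1
  simp [cdf, this]

lemma cdf_map (hsupp : ρ (Iio 0) = 0) :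
    ρ.map (cdf ρ) = volume.restrict (Ioc 0 1) := by
  have hprob : IsProbabilityMeasure (ρ.map (cdf ρ)) :=
    Measure.isProbabilityMeasure_map (cdf_measurable ρ).aemeasurable
  refine Measure.ext_of_Iic _ _ (fun s => ?_)
  rw [Measure.map_apply (cdf_measurable ρ) measurableSet_Iic,
    Measure.restrict_apply measurableSet_Iic]
  rcases lt_or_ge s 0 with hs | hs
  · have h1 : cdf ρ ⁻¹' Iic s = ∅ := by
      ext r; simp only [mem_preimage, mem_Iic, mem_empty_iff_false, iff_false, not_le]
      exact lt_of_lt_of_le hs (cdf_nonneg ρ r)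
    have h2 : Iic s ∩ Ioc 0 1 = ∅ := by
      ext x; simp only [mem_inter_iff, mem_Iic, mem_Ioc, mem_empty_iff_false, iff_false]
      rintro ⟨h1', h2', _⟩; linarith
    simp [h1, h2]
  rcases le_or_gt 1 s with hs1 | hs1
  · have h1 : cdf ρ ⁻¹' Iic s = univ := by
      ext r; simp only [mem_preimage, mem_Iic, mem_univ, iff_true]
      exact le_trans (cdf_le_one ρ r) hs1
    have h2 : Iic s ∩ Ioc 0 1 = Ioc 0 1 := by
      rw [inter_eq_right]; intro x hx; exact le_trans hx.2 hs1
    simp [h1, h2]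
  · -- 0 ≤ s < 1
    set T := cdf ρ ⁻¹' Iic s with hT
    have hTne : T.Nonempty := ⟨-1, by
      simp only [hT, mem_preimage, mem_Iic]
      rw [cdf_nonpos ρ hsupp (by norm_num : (-1:ℝ) ≤ 0)]; exact hs⟩
    obtain ⟨M, hM⟩ : ∃ M, s < cdf ρ M := by
      have := (cdf_tendsto_one ρ).eventually (eventually_gt_nhds hs1)
      exact this.exists
    have hTbdd : BddAbove T := by
      refine ⟨M, fun r hr => ?_⟩
      by_contra h
      push_neg at h
      exact absurd (le_trans (cdf_mono ρ h.le) hr) (not_le.2 hM)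
    have hTclosed : IsClosed T := IsClosed.preimage (cdf_continuous ρ) isClosed_Iic
    set rs := sSup T with hrs
    have hrsT : rs ∈ T := hTclosed.csSup_mem hTne hTbdd
    have hTeq : T = Iic rs := by
      ext r
      constructor
      · exact fun hr => le_csSup hTbdd hr
      · intro hr
        exact le_trans (cdf_mono ρ hr) hrsT
    have hFrs : cdf ρ rs = s := by
      refine le_antisymm hrsT ?_
      by_contra h
      push_neg at h
      have hcont : ContinuousAt (cdf ρ) rs := (cdf_continuous ρ).continuousAt
      have h2 : ∀ᶠ y in 𝓝 rs, cdf ρ y < s := hcont (Iio_mem_nhds h)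
      rcases Metric.eventually_nhds_iff.mp h2 with ⟨δ, δpos, hδ⟩
      have : rs + δ/2 ∈ T := by
        refine le_of_lt (hδ ?_)
        simp [Real.dist_eq, abs_of_nonneg, δpos.le]
        linarith
      have := le_csSup hTbdd this
      linarith
    have h2 : Iic s ∩ Ioc 0 1 = Ioc 0 s := by
      ext x
      simp only [mem_inter_iff, mem_Iic, mem_Ioc]
      exact ⟨fun ⟨a, b, c⟩ => ⟨b, a⟩, fun ⟨a, b⟩ => ⟨b, a, le_trans b hs1.le⟩⟩
    rw [hTeq, h2, ← ofReal_cdf ρ rs, hFrs, Real.volume_Ioc]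
    norm_num

lemma cdf_measure_Ioi (x : ℝ) : ρ (Ioi x) = ENNReal.ofReal (1 - cdf ρ x) := by
  rw [← compl_Iic, measure_compl measurableSet_Iic (measure_ne_top ρ _), measure_univ,
    ← ofReal_cdf ρ x, ENNReal.ofReal_sub 1 (cdf_nonneg ρ x), ENNReal.ofReal_one]

lemma cdf_preimage_Ioi (hsupp : ρ (Iio 0) = 0) (x : ℝ) :
    ρ (cdf ρ ⁻¹' Ioi (cdf ρ x)) = ENNReal.ofReal (1 - cdf ρ x) := by
  have h1 : ρ (cdf ρ ⁻¹' Ioi (cdf ρ x)) = (ρ.map (cdf ρ)) (Ioi (cdf ρ x)) := by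
    rw [Measure.map_apply (cdf_measurable ρ) measurableSet_Ioi]
  rw [h1, cdf_map ρ hsupp, Measure.restrict_apply measurableSet_Ioi]
  have h2 : Ioi (cdf ρ x) ∩ Ioc 0 1 = Ioc (cdf ρ x) 1 := by
    ext u
    simp only [mem_inter_iff, mem_Ioi, mem_Ioc]
    exact ⟨fun ⟨a, b, c⟩ => ⟨a, c⟩, fun ⟨a, b⟩ => ⟨a, lt_of_le_of_lt (cdf_nonneg ρ x) a, b⟩⟩
  rw [h2, Real.volume_Ioc]

lemma cdf_preimage_subset (x : ℝ) : cdf ρ ⁻¹' Ioi (cdf ρ x) ⊆ Ioi x := by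
  intro r hr
  simp only [mem_preimage, mem_Ioi] at hr ⊢
  by_contra h
  push_neg at h
  exact absurd (cdf_mono ρ h) (not_le.2 hr)

lemma slice_null (hsupp : ρ (Iio 0) = 0) (x : ℝ) :
    ρ (Ioi x \ cdf ρ ⁻¹' Ioi (cdf ρ x)) = 0 := by
  have hm : MeasurableSet (cdf ρ ⁻¹' Ioi (cdf ρ x)) :=
    (cdf_measurable ρ) measurableSet_Ioi
  rw [measure_diff (cdf_preimage_subset ρ x) hm.nullMeasurableSet (measure_ne_top ρ _),
    cdf_measure_Ioi ρ x, cdf_preimage_Ioi ρ hsupp x, tsub_self]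

lemma setIntegral_comp_cdf (hsupp : ρ (Iio 0) = 0) (x : ℝ) (φ : ℝ → ℝ) (hφ : Measurable φ) :
    ∫ r in Ioi x, φ (cdf ρ r) ∂ρ = ∫ u in Ioc (cdf ρ x) 1, φ u := by
  have hae : Ioi x =ᵐ[ρ] (cdf ρ ⁻¹' Ioi (cdf ρ x)) := by
    rw [Filter.eventuallyEq_set]
    have h1 := slice_null ρ hsupp x
    filter_upwards [measure_eq_zero_iff_ae_notMem.mp h1] with r hr
    constructor
    · intro hrx
      by_contra h
      exact hr ⟨hrx, h⟩
    · exact fun h => cdf_preimage_subset ρ x h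
  rw [setIntegral_congr_set hae,
    ← setIntegral_map measurableSet_Ioi hφ.aestronglyMeasurable (cdf_measurable ρ).aemeasurable,
    cdf_map ρ hsupp]
  rw [Measure.restrict_restrict measurableSet_Ioi]
  have h2 : Ioi (cdf ρ x) ∩ Ioc 0 1 = Ioc (cdf ρ x) 1 := by
    ext u
    simp only [mem_inter_iff, mem_Ioi, mem_Ioc]
    exact ⟨fun ⟨a, b, c⟩ => ⟨a, c⟩, fun ⟨a, b⟩ => ⟨a, lt_of_le_of_lt (cdf_nonneg ρ x) a, b⟩⟩
  rw [h2]


end AuxCdf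

section PhiEval
variable (Wc : ℝ → ℝ)

lemma Gfun_sub (hWc : Continuous Wc) (p q : ℝ) : ∫ u in p..q, Wc u = Gfun Wc q - Gfun Wc p := by
  unfold Gfun
  exact (intervalIntegral.integral_interval_sub_left (hWc.intervalIntegrable 0 q)
    (hWc.intervalIntegrable 0 p)).symm

lemma phi_eval (hWc : Continuous Wc) (a b t : ℝ) (ha : 0 ≤ a) (ha1 : a ≤ 1) (hb : 0 ≤ b) (hb1 : b ≤ 1)
    (ht : 0 ≤ t) (ht1 : t < 1) :
    (1 - t) * ∫ u in Ioc b 1, Wc ((1-t)*u + t * (Ioi a).indicator (fun _ => (1:ℝ)) u) =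
    if a ≤ b then Gfun Wc 1 - Gfun Wc ((1-t)*b + t)
    else (Gfun Wc 1 - Gfun Wc ((1-t)*b)) - (Gfun Wc ((1-t)*a + t) - Gfun Wc ((1-t)*a)) := by
  have htne : (1 - t) ≠ 0 := by linarith
  have key1 : ∀ p q : ℝ, ∫ u in p..q, Wc ((1-t)*u + t) =
      (1-t)⁻¹ * (Gfun Wc ((1-t)*q + t) - Gfun Wc ((1-t)*p + t)) := by
    intro p q
    rw [intervalIntegral.integral_comp_mul_add Wc htne t, Gfun_sub Wc hWc, smul_eq_mul]
  have key0 : ∀ p q : ℝ, ∫ u in p..q, Wc ((1-t)*u) =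
      (1-t)⁻¹ * (Gfun Wc ((1-t)*q) - Gfun Wc ((1-t)*p)) := by
    intro p q
    have : ∀ u : ℝ, Wc ((1-t)*u) = Wc ((1-t)*u + 0) := by intro u; rw [add_zero]
    simp_rw [this]
    rw [intervalIntegral.integral_comp_mul_add Wc htne 0, Gfun_sub Wc hWc, smul_eq_mul, add_zero,
      add_zero]
  by_cases hab : a ≤ b
  · rw [if_pos hab]
    have heq : ∫ u in Ioc b 1, Wc ((1-t)*u + t * (Ioi a).indicator (fun _ => (1:ℝ)) u) =
        ∫ u in Ioc b 1, Wc ((1-t)*u + t) := by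
      refine setIntegral_congr_ae measurableSet_Ioc ?_
      filter_upwards [compl_mem_ae_iff.mpr (Real.volume_singleton : volume ({a} : Set ℝ) = 0)] with u hu hmem
      have hune : u ≠ a := by simpa [mem_compl_iff] using hu
      have : u ∈ Ioi a := lt_of_le_of_ne (le_trans hab hmem.1.le) (Ne.symm hune)
      rw [indicator_of_mem this]
      norm_num
    rw [heq, ← intervalIntegral.integral_of_le hb1, key1]
    field_simp
    rw [sub_add_cancel]
  · push_neg at hab
    rw [if_neg (not_le.2 hab)]
    have hsplit : Ioc b 1 = Ioc b a ∪ Ioc a 1 := (Ioc_union_Ioc_eq_Ioc hab.le ha1).symm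
    have e0 : ∀ u ∈ Ioc b a, Wc ((1-t)*u + t * (Ioi a).indicator (fun _ => (1:ℝ)) u)
        = Wc ((1-t)*u) := by
      intro u hu
      rw [indicator_of_notMem (by simpa using hu.2 : u ∉ Ioi a)]
      norm_num
    have e1 : ∀ u ∈ Ioc a 1, Wc ((1-t)*u + t * (Ioi a).indicator (fun _ => (1:ℝ)) u)
        = Wc ((1-t)*u + t) := by
      intro u hu
      rw [indicator_of_mem (show u ∈ Ioi a from mem_Ioi.mpr hu.1)]
      norm_num
    have i0 : IntegrableOn (fun u => Wc ((1-t)*u + t * (Ioi a).indicator (fun _ => (1:ℝ)) u))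
        (Ioc b a) volume := by
      have c0 : Continuous fun u : ℝ => Wc ((1-t)*u) := hWc.comp (by continuity)
      refine Integrable.congr (c0.integrableOn_Ioc (a := b) (b := a)) ?_
      rw [Filter.eventuallyEq_iff_exists_mem]
      exact ⟨Ioc b a, self_mem_ae_restrict measurableSet_Ioc, fun u hu => (e0 u hu).symm⟩
    have i1 : IntegrableOn (fun u => Wc ((1-t)*u + t * (Ioi a).indicator (fun _ => (1:ℝ)) u))
        (Ioc a 1) volume := by
      have c1 : Continuous fun u : ℝ => Wc ((1-t)*u + t) := hWc.comp (by continuity)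
      refine Integrable.congr (c1.integrableOn_Ioc (a := a) (b := 1)) ?_
      rw [Filter.eventuallyEq_iff_exists_mem]
      exact ⟨Ioc a 1, self_mem_ae_restrict measurableSet_Ioc, fun u hu => (e1 u hu).symm⟩
    rw [hsplit, setIntegral_union (Ioc_disjoint_Ioc_of_le le_rfl) measurableSet_Ioc i0 i1,
      setIntegral_congr_fun measurableSet_Ioc e0, setIntegral_congr_fun measurableSet_Ioc e1,
      ← intervalIntegral.integral_of_le hab.le, ← intervalIntegral.integral_of_le ha1,
      key0, key1]
    field_simp
    ring


end PhiEval

section Key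
variable (ρ : Measure ℝ) [IsProbabilityMeasure ρ] [NullSingletonClass ρ]

lemma key_identity (hsupp : ρ (Iio 0) = 0)
    (Wc : ℝ → ℝ) (hWc : Continuous Wc) (B : ℝ) (hWbd : ∀ u, |Wc u| ≤ B)
    (R M t : ℝ) (hR : 0 ≤ R) (hRM : R ≤ M) (ht : 0 ≤ t) (ht1 : t < 1)
    (hvanish : ∀ r, M ≤ r →
      Wc ((1-t) * cdf ρ r + t * (Ici R).indicator (fun _ => (1:ℝ)) r) = 0) :
    (1 - t) * (∫ r, r * Wc ((1-t) * cdf ρ r + t * (Ici R).indicator (fun _ => (1:ℝ)) r) ∂ρ)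
    = (∫ x in Ioc (0:ℝ) M, (Gfun Wc 1 -
        Gfun Wc ((1-t) * cdf ρ x + t * (Ici R).indicator (fun _ => (1:ℝ)) x)))
      - (Gfun Wc ((1-t) * cdf ρ R + t) - Gfun Wc ((1-t) * cdf ρ R)) * R := by
  have hB0 : 0 ≤ B := le_trans (abs_nonneg _) (hWbd 0)
  set F := cdf ρ with hF
  set a := F R with ha
  set ind : ℝ → ℝ := (Ici R).indicator (fun _ => (1:ℝ)) with hind
  set Ft : ℝ → ℝ := fun r => (1-t) * F r + t * ind r with hFt
  set φ : ℝ → ℝ := fun u => Wc ((1-t)*u + t * (Ioi a).indicator (fun _ => (1:ℝ)) u) with hφdef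
  have hFt_meas : Measurable Ft := by
    apply Measurable.add
    · exact (cdf_measurable ρ).const_mul _
    · exact (measurable_const.indicator measurableSet_Ici).const_mul _
  have hφ_meas : Measurable φ := by
    apply hWc.measurable.comp
    apply Measurable.add
    · exact measurable_id.const_mul _
    · exact (measurable_const.indicator measurableSet_Ioi).const_mul _
  -- Step A : a.e. equality Wc (Ft r) = φ (F r)
  have stepA : ∀ᵐ r ∂ρ, Wc (Ft r) = φ (F r) := by
    have hN2 := slice_null ρ hsupp R
    have hN1 : ρ {R} = 0 := measure_singleton R
    filter_upwards [measure_eq_zero_iff_ae_notMem.mp hN2, measure_eq_zero_iff_ae_notMem.mp hN1]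
      with r hr2 hr1
    rcases le_or_gt R r with h | h
    · have hrR : R < r := lt_of_le_of_ne h (by simpa [eq_comm] using hr1)
      have hFr : a < F r := by
        by_contra hc
        push_neg at hc
        exact hr2 ⟨hrR, by simpa [mem_preimage, mem_Ioi] using hc⟩
      have e1 : ind r = 1 := indicator_of_mem (mem_Ici.mpr h) _
      have e2 : (Ioi a).indicator (fun _ => (1:ℝ)) (F r) = 1 :=
        indicator_of_mem (mem_Ioi.mpr hFr) _
      simp only [hφdef, hFt, e1, e2]
    · have e1 : ind r = 0 := indicator_of_notMem (by simpa using h) _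
      have hFr : F r ≤ a := cdf_mono ρ h.le
      have e2 : (Ioi a).indicator (fun _ => (1:ℝ)) (F r) = 0 :=
        indicator_of_notMem (by simpa using hFr) _
      simp only [hφdef, hFt, e1, e2]
  have h0M : (0:ℝ) ≤ M := le_trans hR hRM
  -- the slice function
  set ψ : ℝ → ℝ := fun x => ∫ r in Ioi x, Wc (Ft r) ∂ρ with hψ
  -- Step B : Fubini
  have stepB : ∫ r, r * Wc (Ft r) ∂ρ = ∫ x in Ioc (0:ℝ) M, ψ x := by
    set f : ℝ → ℝ → ℝ := fun r x => (Iio r).indicator (fun _ => Wc (Ft r)) x with hf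
    have hB1 : ∀ᵐ r ∂ρ, r * Wc (Ft r) = ∫ x in Ioc (0:ℝ) M, f r x := by
      have : ∀ᵐ r ∂ρ, ¬ (r ∈ Iio (0:ℝ)) := measure_eq_zero_iff_ae_notMem.mp hsupp
      filter_upwards [this] with r hr
      have hr0 : 0 ≤ r := by simpa using hr
      rw [setIntegral_indicator measurableSet_Iio, setIntegral_const, smul_eq_mul]
      rcases le_or_gt r M with hrM | hrM
      · have : Ioc (0:ℝ) M ∩ Iio r = Ioo 0 r := by
          ext y
          simp only [mem_inter_iff, mem_Ioc, mem_Iio, mem_Ioo]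
          exact ⟨fun ⟨⟨h1, h2⟩, h3⟩ => ⟨h1, h3⟩,
            fun ⟨h1, h2⟩ => ⟨⟨h1, le_trans h2.le hrM⟩, h2⟩⟩
        rw [this, Real.volume_real_Ioo_of_le hr0, sub_zero, mul_comm]
      · rw [hvanish r hrM.le]
        simp
    rw [integral_congr_ae hB1]
    have hfin : IsFiniteMeasure (volume.restrict (Ioc (0:ℝ) M)) := by
      constructor
      rw [Measure.restrict_apply_univ]
      exact measure_Ioc_lt_top
    have hmeas_unc : Measurable (Function.uncurry f) := by
      have : Function.uncurry f = fun p : ℝ × ℝ =>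
          if p.2 < p.1 then Wc (Ft p.1) else 0 := by
        funext p
        simp only [Function.uncurry, hf, indicator, mem_Iio]
      rw [this]
      exact Measurable.ite (measurableSet_lt measurable_snd measurable_fst)
        ((hWc.measurable.comp hFt_meas).comp measurable_fst) measurable_const
    have hint_unc : Integrable (Function.uncurry f) (ρ.prod (volume.restrict (Ioc (0:ℝ) M))) := by
      refine Integrable.mono' (integrable_const B) hmeas_unc.aestronglyMeasurable ?_
      refine Filter.Eventually.of_forall (fun p => ?_)
      simp only [Function.uncurry, hf]
      refine le_trans (norm_indicator_le_norm_self _ _) ?_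
      simpa using hWbd (Ft p.1)
    have := integral_integral_swap hint_unc
    rw [this]
    refine setIntegral_congr_fun measurableSet_Ioc (fun x hx => ?_)
    have : ∀ r : ℝ, f r x = (Ioi x).indicator (fun r' => Wc (Ft r')) r := by
      intro r
      simp only [hf, indicator, mem_Iio, mem_Ioi]
    simp_rw [this]
    rw [MeasureTheory.integral_indicator measurableSet_Ioi]
  -- Step C : slice via pushforward
  have stepC : ∀ x : ℝ, ψ x = ∫ u in Ioc (F x) 1, φ u := by
    intro x
    have h1 : ψ x = ∫ r in Ioi x, φ (F r) ∂ρ :=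
      setIntegral_congr_ae measurableSet_Ioi
        (by filter_upwards [stepA] with r h using fun _ => h)
    rw [h1]
    exact setIntegral_comp_cdf ρ hsupp x φ hφ_meas
  -- Step D : per-slice evaluation
  set Δ : ℝ := Gfun Wc ((1-t)*a + t) - Gfun Wc ((1-t)*a) with hΔ
  have stepD : ∀ x ∈ Ioc (0:ℝ) M, (1-t) * ψ x =
      (Gfun Wc 1 - Gfun Wc (Ft x)) - Δ * (Iio R).indicator (fun _ => (1:ℝ)) x := by
    intro x hx
    rw [stepC x]
    rw [phi_eval Wc hWc a (F x) t (cdf_nonneg ρ R) (cdf_le_one ρ R) (cdf_nonneg ρ x)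
      (cdf_le_one ρ x) ht ht1]
    rcases le_or_gt R x with h | h
    · have hax : a ≤ F x := cdf_mono ρ h
      rw [if_pos hax]
      have e1 : ind x = 1 := indicator_of_mem (mem_Ici.mpr h) _
      have e2 : (Iio R).indicator (fun _ => (1:ℝ)) x = 0 :=
        indicator_of_notMem (by simpa using h) _
      rw [e2]
      simp only [hFt, e1]
      ring_nf
    · have e1 : ind x = 0 := indicator_of_notMem (by simpa using h) _
      have e2 : (Iio R).indicator (fun _ => (1:ℝ)) x = 1 := indicator_of_mem (mem_Iio.mpr h) _
      have hxa : F x ≤ a := cdf_mono ρ h.le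
      rcases lt_or_eq_of_le hxa with hlt | heq
      · rw [if_neg (not_le.2 hlt), e2]
        simp only [hFt, e1, hΔ]
        ring_nf
      · rw [if_pos (le_of_eq heq.symm), e2]
        simp only [hFt, e1, hΔ, heq]
        ring_nf
  -- Step E : integrate
  have hGcont : Continuous (Gfun Wc) :=
    intervalIntegral.continuous_primitive (fun a b => hWc.intervalIntegrable a b) 0
  have hint_target : IntegrableOn (fun x => Gfun Wc 1 - Gfun Wc (Ft x)) (Ioc (0:ℝ) M) volume := by
    have hm : Measurable fun x => Gfun Wc 1 - Gfun Wc (Ft x) :=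
      measurable_const.sub (hGcont.measurable.comp hFt_meas)
    refine Integrable.mono' (integrable_const (|Gfun Wc 1| + B)) hm.aestronglyMeasurable ?_
    refine Filter.Eventually.of_forall (fun x => ?_)
    have hind01 : 0 ≤ ind x ∧ ind x ≤ 1 := by
      simp only [hind, indicator]
      split <;> norm_num
    have hFt01 : 0 ≤ Ft x ∧ Ft x ≤ 1 := by
      constructor
      · have : 0 ≤ (1-t) * F x := mul_nonneg (by linarith) (cdf_nonneg ρ x)
        have : 0 ≤ t * ind x := mul_nonneg ht hind01.1
        simp only [hFt]
        nlinarith [mul_nonneg (by linarith : (0:ℝ) ≤ 1 - t) (cdf_nonneg ρ x)]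
      · simp only [hFt]
        nlinarith [cdf_le_one ρ x, hind01.2, cdf_nonneg ρ x, hind01.1]
    have h1 : |Gfun Wc (Ft x)| ≤ B := by
      have := intervalIntegral.norm_integral_le_of_norm_le_const
        (C := B) (f := Wc) (a := 0) (b := Ft x) (fun y _ => by simpa using hWbd y)
      simp only [Gfun]
      calc |∫ s in (0:ℝ)..(Ft x), Wc s| ≤ B * |Ft x - 0| := by simpa using this
      _ ≤ B * 1 := by
          rw [sub_zero]
          exact mul_le_mul_of_nonneg_left (abs_le.2 ⟨by linarith [hFt01.1], hFt01.2⟩) hB0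
      _ = B := mul_one B
    calc ‖Gfun Wc 1 - Gfun Wc (Ft x)‖ ≤ |Gfun Wc 1| + |Gfun Wc (Ft x)| := norm_sub_le _ _
    _ ≤ |Gfun Wc 1| + B := by linarith
  have hint_ind : IntegrableOn
      (fun x => Δ * (Iio R).indicator (fun _ => (1:ℝ)) x) (Ioc (0:ℝ) M) volume := by
    have hm : Measurable fun x => Δ * (Iio R).indicator (fun _ => (1:ℝ)) x :=
      (measurable_const.indicator measurableSet_Iio).const_mul Δ
    refine Integrable.mono' (integrable_const |Δ|) hm.aestronglyMeasurable ?_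
    refine Filter.Eventually.of_forall (fun x => ?_)
    simp only [norm_mul, indicator]
    split <;> simp [abs_nonneg]
  rw [stepB, ← MeasureTheory.integral_const_mul]
  have e1 : ∫ x in Ioc (0:ℝ) M, (1-t) * ψ x = ∫ x in Ioc (0:ℝ) M,
      ((Gfun Wc 1 - Gfun Wc (Ft x)) - Δ * (Iio R).indicator (fun _ => (1:ℝ)) x) :=
    setIntegral_congr_fun measurableSet_Ioc stepD
  rw [e1, integral_sub hint_target hint_ind]
  congr 1
  rw [MeasureTheory.integral_const_mul, setIntegral_indicator measurableSet_Iio, setIntegral_const]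
  have hiR : Ioc (0:ℝ) M ∩ Iio R = Ioo 0 R := by
    ext y
    simp only [mem_inter_iff, mem_Ioc, mem_Iio, mem_Ioo]
    exact ⟨fun ⟨⟨h1, h2⟩, h3⟩ => ⟨h1, h3⟩,
      fun ⟨h1, h2⟩ => ⟨⟨h1, le_trans h2.le hRM⟩, h2⟩⟩
  rw [hiR, Real.volume_real_Ioo_of_le hR, sub_zero, smul_eq_mul, mul_one, mul_comm]

end Key

/-- For a non-atomic probability measure `ρ` on `[0,∞)` with finite first moment,
`ζ ∈ (0,1)` and `W : [0,1] → [0,∞)` bounded, continuous, vanishing on `[ζ,1]`, and `R ≥ 0`: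
the one-sided derivative at `t = 0` of `t ↦ Φ_W((1-t)ρ + tδ_R)` exists, equals
`∫_0^∞ W(F_ρ(r)) (F_ρ(r) - 1_{[R,∞)}(r)) dr`, and is bounded above by
`IF_max(ρ,W) = ∫_0^{F_ρ⁻¹(ζ)} W(F_ρ(r)) F_ρ(r) dr`, uniformly in `R`. -/
theorem influence_of_PhiW_bounded
    (ρ : Measure ℝ) [IsProbabilityMeasure ρ] [NullSingletonClass ρ]
    (hsupp : ρ (Iio 0) = 0) (hint : Integrable (fun r : ℝ => r) ρ)
    (ζ : ℝ) (hζ : ζ ∈ Ioo (0 : ℝ) 1)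
    (W : ℝ → ℝ) (hWcont : ContinuousOn W (Icc 0 1))
    (hWnn : ∀ t ∈ Icc (0 : ℝ) 1, 0 ≤ W t)
    (B : ℝ) (hWbd : ∀ t ∈ Icc (0 : ℝ) 1, W t ≤ B)
    (hWzero : ∀ t, ζ ≤ t → W t = 0)
    (R : ℝ) (hR : 0 ≤ R) :
    HasDerivWithinAt (fun t : ℝ => PhiW W (mix ρ R t))
        (∫ r in Ioi (0 : ℝ),
          W (cdf ρ r) * (cdf ρ r - indicator (Ici R) (fun _ => (1 : ℝ)) r)) (Ici 0) 0 ∧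
    (∫ r in Ioi (0 : ℝ),
        W (cdf ρ r) * (cdf ρ r - indicator (Ici R) (fun _ => (1 : ℝ)) r)) ≤
      ∫ r in (0 : ℝ)..(quant ρ ζ), W (cdf ρ r) * cdf ρ r := by
  obtain ⟨hζ0, hζ1⟩ := hζ
  -- the globally continuous extension of W
  set proj : ℝ → ℝ := fun u => max 0 (min u 1) with hproj
  have hproj_mem : ∀ u, proj u ∈ Icc (0:ℝ) 1 := fun u =>
    ⟨le_max_left _ _, max_le (by norm_num) (min_le_right _ _)⟩
  have hproj_cont : Continuous proj := Continuous.max continuous_const (continuous_id.min continuous_const)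
  have hproj_eq : ∀ u, 0 ≤ u → u ≤ 1 → proj u = u := by
    intro u h0 h1
    simp [hproj, min_eq_left h1, max_eq_right h0]
  set Wc : ℝ → ℝ := fun u => W (proj u) with hWcdef
  have hWc : Continuous Wc := hWcont.comp_continuous hproj_cont hproj_mem
  have hWc_nn : ∀ u, 0 ≤ Wc u := fun u => hWnn _ (hproj_mem u)
  have hWc_bd : ∀ u, |Wc u| ≤ B := fun u => by
    rw [abs_of_nonneg (hWc_nn u)]; exact hWbd _ (hproj_mem u)
  have hB0 : 0 ≤ B := le_trans (hWc_nn 0) (le_trans (le_abs_self _) (hWc_bd 0))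
  have hWc_zero : ∀ u, ζ ≤ u → Wc u = 0 := by
    intro u hu
    refine hWzero _ ?_
    simp only [hproj, hWcdef]
    have : ζ ≤ min u 1 := le_min hu hζ1.le
    exact le_trans this (le_max_right _ _)
  have hWc_eq : ∀ u, 0 ≤ u → u ≤ 1 → Wc u = W u := by
    intro u h0 h1; rw [hWcdef]; simp only []; rw [hproj_eq u h0 h1]
  have hWc_cdf : ∀ μ : Measure ℝ, ∀ r, cdf μ r ≤ 1 → Wc (cdf μ r) = W (cdf μ r) :=
    fun μ r h1 => hWc_eq _ ENNReal.toReal_nonneg h1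
  set F := cdf ρ with hF
  set ind : ℝ → ℝ := (Ici R).indicator (fun _ => (1:ℝ)) with hind
  have hind01 : ∀ x, 0 ≤ ind x ∧ ind x ≤ 1 := by
    intro x; simp only [hind, indicator]; split <;> norm_num
  -- choose M
  obtain ⟨M, hMζ, hRM⟩ : ∃ M, ζ ≤ F M ∧ R ≤ M := by
    have h1 := (cdf_tendsto_one ρ).eventually (eventually_ge_nhds hζ1)
    exact ((h1.and (eventually_ge_atTop R)).exists)
  have h0M : (0:ℝ) ≤ M := le_trans hR hRM
  -- cdf of the mixture
  have mix_cdf : ∀ t : ℝ, 0 ≤ t → t ≤ 1 → ∀ r, cdf (mix ρ R t) r = (1-t) * F r + t * ind r := by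
    intro t ht0 ht1 r
    have h1 : (mix ρ R t) (Iic r) =
        ENNReal.ofReal (1-t) * ρ (Iic r) + ENNReal.ofReal t * (Measure.dirac R) (Iic r) := by
      simp [mix, Measure.add_apply, Measure.smul_apply, smul_eq_mul]
    have h2 : (Measure.dirac R) (Iic r) = (Iic r).indicator (fun _ => (1:ℝ≥0∞)) R :=
      Measure.dirac_apply' R measurableSet_Iic
    rw [cdf, h1, h2]
    rcases le_or_gt R r with h | h
    · have e2 : (Iic r).indicator (fun _ => (1:ℝ≥0∞)) R = 1 :=
        indicator_of_mem (mem_Iic.mpr h) _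
      have e1 : ind r = 1 := indicator_of_mem (mem_Ici.mpr h) _
      rw [e2, mul_one, ENNReal.toReal_add
          (ENNReal.mul_ne_top ENNReal.ofReal_ne_top (measure_ne_top ρ _)) ENNReal.ofReal_ne_top,
        ENNReal.toReal_mul, ENNReal.toReal_ofReal (by linarith), ENNReal.toReal_ofReal ht0, e1,
        mul_one]
      simp [hF, cdf]
    · have e2 : (Iic r).indicator (fun _ => (1:ℝ≥0∞)) R = 0 :=
        indicator_of_notMem (by simpa using h) _
      have e1 : ind r = 0 := indicator_of_notMem (by simpa using h) _
      rw [e2, mul_zero, add_zero, ENNReal.toReal_mul,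
        ENNReal.toReal_ofReal (by linarith), e1, mul_zero, add_zero]
      simp [hF, cdf]
  have hFt01 : ∀ t : ℝ, 0 ≤ t → t ≤ 1 → ∀ r, 0 ≤ (1-t) * F r + t * ind r ∧
      (1-t) * F r + t * ind r ≤ 1 := by
    intro t ht0 ht1 r
    constructor
    · have h1 : 0 ≤ (1-t) * F r := mul_nonneg (by linarith) (cdf_nonneg ρ r)
      have h2 : 0 ≤ t * ind r := mul_nonneg ht0 (hind01 r).1
      linarith
    · nlinarith [cdf_le_one ρ r, cdf_nonneg ρ r, (hind01 r).1, (hind01 r).2]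
  -- vanishing beyond M
  have hvan : ∀ t : ℝ, 0 ≤ t → t ≤ 1 → ∀ r, M ≤ r → Wc ((1-t) * F r + t * ind r) = 0 := by
    intro t ht0 ht1 r hr
    refine hWc_zero _ ?_
    have e1 : ind r = 1 := indicator_of_mem (mem_Ici.mpr (le_trans hRM hr)) _
    have hFr : ζ ≤ F r := le_trans hMζ (cdf_mono ρ hr)
    rw [e1, mul_one]
    nlinarith [cdf_le_one ρ r]
  -- decomposition of PhiW of the mixture
  have hgint : ∀ t : ℝ, Integrable (fun r => r * Wc ((1-t) * F r + t * ind r)) ρ := by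
    intro t
    have hm : Measurable fun r => r * Wc ((1-t) * F r + t * ind r) := by
      apply measurable_id'.mul
      apply hWc.measurable.comp
      exact ((cdf_measurable ρ).const_mul _).add
        ((measurable_const.indicator measurableSet_Ici).const_mul _)
    refine Integrable.mono' (hint.norm.const_mul B) hm.aestronglyMeasurable ?_
    refine Filter.Eventually.of_forall (fun r => ?_)
    rw [norm_mul, mul_comm]
    have hb : ‖Wc ((1-t) * F r + t * ind r)‖ ≤ B := by
      rw [Real.norm_eq_abs]; exact hWc_bd _
    exact mul_le_mul_of_nonneg_right hb (norm_nonneg r)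
  have phi_decomp : ∀ t : ℝ, 0 ≤ t → t ≤ 1 → PhiW W (mix ρ R t) =
      (1-t) * (∫ r, r * Wc ((1-t) * F r + t * ind r) ∂ρ)
      + t * (R * Wc ((1-t) * F R + t)) := by
    intro t ht0 ht1
    set g : ℝ → ℝ := fun r => r * Wc ((1-t) * F r + t * ind r) with hg
    have e1 : PhiW W (mix ρ R t) = ∫ r, g r ∂(mix ρ R t) := by
      rw [PhiW]
      refine integral_congr_ae (Filter.Eventually.of_forall (fun r => ?_))
      have : W (cdf (mix ρ R t) r) = Wc ((1-t) * F r + t * ind r) := by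
        rw [← hWc_cdf (mix ρ R t) r (by rw [mix_cdf t ht0 ht1 r]; exact (hFt01 t ht0 ht1 r).2),
          mix_cdf t ht0 ht1 r]
      show r * W (cdf (mix ρ R t) r) = r * Wc ((1-t) * F r + t * ind r)
      rw [this]
    have hdirac : Integrable g (Measure.dirac R) :=
      (integrable_const (g R)).congr (ae_eq_dirac g).symm
    rw [e1, mix, integral_add_measure ((hgint t).smul_measure ENNReal.ofReal_ne_top)
        (hdirac.smul_measure ENNReal.ofReal_ne_top),
      MeasureTheory.integral_smul_measure, MeasureTheory.integral_smul_measure, integral_dirac,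
      ENNReal.toReal_ofReal (by linarith : (0:ℝ) ≤ 1 - t), ENNReal.toReal_ofReal ht0,
      smul_eq_mul, smul_eq_mul]
    congr 2
    show R * Wc ((1-t) * F R + t * ind R) = R * Wc ((1-t) * F R + t)
    rw [show ind R = 1 from indicator_of_mem (mem_Ici.mpr le_rfl) _, mul_one]
  -- the two pieces
  set a := F R with ha
  set hfun : ℝ → ℝ := fun t => ∫ x in Ioc (0:ℝ) M,
    (Gfun Wc 1 - Gfun Wc ((1-t) * F x + t * ind x)) with hhfun
  set cfun : ℝ → ℝ := fun t => t * (R * Wc ((1-t)*a + t))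
    - (Gfun Wc ((1-t)*a + t) - Gfun Wc ((1-t)*a)) * R with hcfun
  have identity : ∀ t : ℝ, 0 ≤ t → t < 1 → PhiW W (mix ρ R t) = hfun t + cfun t := by
    intro t ht0 ht1
    rw [phi_decomp t ht0 ht1.le,
      key_identity ρ hsupp Wc hWc B hWc_bd R M t hR hRM ht0 ht1 (hvan t ht0 ht1.le)]
    simp only [hhfun, hcfun]
    ring
  -- Lipschitz bound for Gfun
  have hGlip : ∀ p q : ℝ, |Gfun Wc q - Gfun Wc p| ≤ B * |q - p| := by
    intro p q
    rw [← Gfun_sub Wc hWc p q]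
    simpa using intervalIntegral.norm_integral_le_of_norm_le_const
      (C := B) (f := Wc) (a := p) (b := q) (fun y _ => by simpa using hWc_bd y)
  have hGcont : Continuous (Gfun Wc) :=
    intervalIntegral.continuous_primitive (fun a b => hWc.intervalIntegrable a b) 0
  have hFt_meas : ∀ t : ℝ, Measurable fun x => (1-t) * F x + t * ind x := fun t =>
    ((cdf_measurable ρ).const_mul _).add
      ((measurable_const.indicator measurableSet_Ici).const_mul _)
  have habsF : ∀ x, |F x| ≤ 1 := fun x => abs_le.2 ⟨by linarith [cdf_nonneg ρ x], cdf_le_one ρ x⟩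
  have habsind : ∀ x, |ind x| ≤ 1 := fun x => abs_le.2 ⟨by linarith [(hind01 x).1], (hind01 x).2⟩
  have habsFind : ∀ x, |F x - ind x| ≤ 1 := fun x => abs_le.2
    ⟨by nlinarith [cdf_nonneg ρ x, cdf_le_one ρ x, (hind01 x).1, (hind01 x).2],
     by nlinarith [cdf_nonneg ρ x, cdf_le_one ρ x, (hind01 x).1, (hind01 x).2]⟩
  have hfinIoc : ∀ c d : ℝ, IsFiniteMeasure (volume.restrict (Ioc c d)) := by
    intro c d
    constructor
    rw [Measure.restrict_apply_univ]
    exact measure_Ioc_lt_top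
  have hbddInt : ∀ (g : ℝ → ℝ) (C : ℝ), Measurable g → (∀ x, |g x| ≤ C) → ∀ (c d : ℝ),
      IntegrableOn g (Ioc c d) volume := by
    intro g C hg hgb c d
    have := hfinIoc c d
    exact Integrable.mono' (integrable_const C) hg.aestronglyMeasurable
      (Filter.Eventually.of_forall fun x => hgb x)
  have hint_t : ∀ t : ℝ, IntegrableOn
      (fun x => Gfun Wc 1 - Gfun Wc ((1-t) * F x + t * ind x)) (Ioc (0:ℝ) M) volume := by
    intro t
    refine hbddInt _ (B * (1 + (|1-t| + |t|)))
      (measurable_const.sub (hGcont.measurable.comp (hFt_meas t))) (fun x => ?_) 0 M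
    have hy : |(1-t) * F x + t * ind x| ≤ |1-t| + |t| := by
      refine le_trans (abs_add_le _ _) ?_
      rw [abs_mul, abs_mul]
      nlinarith [habsF x, habsind x, abs_nonneg (1-t), abs_nonneg t]
    refine le_trans (hGlip _ 1) ?_
    have : |(1:ℝ) - ((1-t) * F x + t * ind x)| ≤ 1 + (|1-t| + |t|) := by
      refine le_trans (abs_sub _ _) ?_
      · simpa using add_le_add (le_refl (1:ℝ)) hy
    nlinarith [this]
  set D : ℝ := ∫ x in Ioc (0:ℝ) M, Wc (F x) * (F x - ind x) with hD
  have hDmeas : Measurable fun x => Wc (F x) * (F x - ind x) :=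
    (hWc.measurable.comp (cdf_measurable ρ)).mul ((cdf_measurable ρ).sub
      (measurable_const.indicator measurableSet_Ici))
  have hDbd : ∀ x, |Wc (F x) * (F x - ind x)| ≤ B := by
    intro x
    rw [abs_mul]
    nlinarith [hWc_bd (F x), habsFind x, abs_nonneg (Wc (F x)), abs_nonneg (F x - ind x)]
  -- derivative of hfun
  have hDer : HasDerivWithinAt hfun D (Ici 0) 0 := by
    rw [hasDerivWithinAt_iff_tendsto_slope]
    have hset : Ici (0:ℝ) \ {0} = Ioi 0 := by
      ext y
      simp only [mem_diff, mem_Ici, mem_singleton_iff, mem_Ioi]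
      constructor
      · rintro ⟨h1, h2⟩; exact lt_of_le_of_ne h1 (Ne.symm h2)
      · intro h; exact ⟨h.le, ne_of_gt h⟩
    rw [hset]
    set Φ : ℝ → ℝ → ℝ :=
      fun t x => (Gfun Wc (F x) - Gfun Wc ((1-t) * F x + t * ind x)) / t with hΦ
    have hslope : ∀ᶠ t in 𝓝[>] (0:ℝ), ∫ x in Ioc (0:ℝ) M, Φ t x = slope hfun 0 t := by
      filter_upwards [self_mem_nhdsWithin] with t ht
      have htne : (t:ℝ) ≠ 0 := ne_of_gt ht
      rw [slope_def_field, sub_zero, hhfun]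
      rw [← integral_sub (hint_t t) (hint_t 0), ← MeasureTheory.integral_div]
      refine setIntegral_congr_fun measurableSet_Ioc (fun x hx => ?_)
      simp only [hΦ]
      norm_num
    refine Tendsto.congr' hslope ?_
    refine tendsto_integral_filter_of_dominated_convergence (fun _ => B) ?_ ?_
      (by have := hfinIoc (0:ℝ) M; exact integrable_const B) ?_
    · refine Filter.Eventually.of_forall (fun t => ?_)
      exact (((hGcont.measurable.comp (cdf_measurable ρ)).sub
        (hGcont.measurable.comp (hFt_meas t))).div_const t).aestronglyMeasurable
    · filter_upwards [self_mem_nhdsWithin] with t ht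
      refine Filter.Eventually.of_forall (fun x => ?_)
      have h3 : |Gfun Wc (F x) - Gfun Wc ((1-t)*F x + t*ind x)| ≤ B * t := by
        refine le_trans (hGlip _ _) ?_
        have he : F x - ((1-t) * F x + t * ind x) = t * (F x - ind x) := by ring
        rw [he, abs_mul, abs_of_pos ht]
        calc B * (t * |F x - ind x|) ≤ B * (t * 1) :=
          mul_le_mul_of_nonneg_left (mul_le_mul_of_nonneg_left (habsFind x) ht.le) hB0
        _ = B * t := by ring
      have h4 : ‖Φ t x‖ ≤ (B * t) / t := by
        show |(Gfun Wc (F x) - Gfun Wc ((1-t) * F x + t * ind x)) / t| ≤ (B * t) / t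
        rw [abs_div, abs_of_pos (show (0:ℝ) < t from ht)]
        exact div_le_div_of_nonneg_right h3 ht.le
      rw [mul_div_assoc, div_self (ne_of_gt ht), mul_one] at h4
      exact h4
    · refine Filter.Eventually.of_forall (fun x => ?_)
      have hline : HasDerivAt (fun s : ℝ => F x + s * (ind x - F x)) (ind x - F x) 0 := by
        simpa using ((hasDerivAt_id (0:ℝ)).mul_const (ind x - F x)).const_add (F x)
      have hGd : HasDerivAt (Gfun Wc) (Wc (F x + 0 * (ind x - F x))) (F x + 0 * (ind x - F x)) :=
        (hWc.integral_hasStrictDerivAt 0 _).hasDerivAt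
      have hcomp : HasDerivAt (fun s : ℝ => Gfun Wc (F x + s * (ind x - F x)))
          (Wc (F x) * (ind x - F x)) 0 := by
        have := hGd.comp 0 hline
        simpa [Function.comp_def] using this
      rw [hasDerivAt_iff_tendsto_slope] at hcomp
      have hmono : 𝓝[>] (0:ℝ) ≤ 𝓝[≠] (0:ℝ) :=
        nhdsWithin_mono 0 (fun y hy => ne_of_gt hy)
      have heq : (fun t => -(slope (fun s : ℝ => Gfun Wc (F x + s * (ind x - F x))) 0 t))
          =ᶠ[𝓝[>] (0:ℝ)] fun t => Φ t x := by
        filter_upwards [self_mem_nhdsWithin] with t ht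
        rw [slope_def_field, sub_zero, hΦ]
        have he : F x + t * (ind x - F x) = (1-t) * F x + t * ind x := by ring
        rw [he]
        ring
      have hval : -(Wc (F x) * (ind x - F x)) = Wc (F x) * (F x - ind x) := by ring
      exact hval ▸ (Tendsto.congr' heq ((hcomp.mono_left hmono).neg))
  -- derivative of cfun
  have hCder : HasDerivAt cfun 0 0 := by
    have c1 : HasDerivAt (fun t : ℝ => t * (R * Wc ((1-t)*a + t))) (R * Wc a) 0 := by
      rw [hasDerivAt_iff_tendsto_slope]
      have heq : (fun t : ℝ => R * Wc ((1-t)*a + t))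
          =ᶠ[𝓝[≠] (0:ℝ)] slope (fun t : ℝ => t * (R * Wc ((1-t)*a + t))) 0 := by
        filter_upwards [self_mem_nhdsWithin] with t ht
        have htne : (t:ℝ) ≠ 0 := by simpa using ht
        rw [slope_def_field, sub_zero]
        field_simp
        ring
      refine Tendsto.congr' heq ?_
      have hcont : ContinuousAt (fun t : ℝ => R * Wc ((1-t)*a + t)) 0 := by
        apply Continuous.continuousAt
        exact continuous_const.mul (hWc.comp
          (((continuous_const.sub continuous_id).mul continuous_const).add continuous_id))
      have h0 : R * Wc ((1-(0:ℝ))*a + 0) = R * Wc a := by norm_num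
      exact h0 ▸ hcont.tendsto.mono_left nhdsWithin_le_nhds
    have lineDer : ∀ c : ℝ, HasDerivAt (fun t : ℝ => Gfun Wc (a + t * c)) (Wc a * c) 0 := by
      intro c
      have hline : HasDerivAt (fun s : ℝ => a + s * c) c 0 := by
        simpa using ((hasDerivAt_id (0:ℝ)).mul_const c).const_add a
      have hGd : HasDerivAt (Gfun Wc) (Wc (a + 0 * c)) (a + 0 * c) :=
        (hWc.integral_hasStrictDerivAt 0 _).hasDerivAt
      have := hGd.comp 0 hline
      simpa [Function.comp_def] using this
    have c2 : HasDerivAt (fun t : ℝ => Gfun Wc ((1-t)*a + t)) (Wc a * (1 - a)) 0 := by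
      have e : (fun t : ℝ => Gfun Wc ((1-t)*a + t)) = fun t : ℝ => Gfun Wc (a + t * (1 - a)) := by
        funext t; congr 1; ring
      rw [e]; exact lineDer (1 - a)
    have c3 : HasDerivAt (fun t : ℝ => Gfun Wc ((1-t)*a)) (Wc a * (-a)) 0 := by
      have e : (fun t : ℝ => Gfun Wc ((1-t)*a)) = fun t : ℝ => Gfun Wc (a + t * (-a)) := by
        funext t; congr 1; ring
      rw [e]; exact lineDer (-a)
    have hsum := c1.sub ((c2.sub c3).mul_const R)
    have : R * Wc a - (Wc a * (1 - a) - Wc a * (-a)) * R = 0 := by ring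
    rw [this] at hsum
    exact hsum
  -- combine
  have hfinal : HasDerivWithinAt (fun t : ℝ => PhiW W (mix ρ R t)) D (Ici 0) 0 := by
    have hsum : HasDerivWithinAt (fun t => hfun t + cfun t) (D + 0) (Ici 0) 0 :=
      hDer.add hCder.hasDerivWithinAt
    rw [add_zero] at hsum
    have heq : (fun t : ℝ => PhiW W (mix ρ R t)) =ᶠ[𝓝[Ici 0] (0:ℝ)] fun t => hfun t + cfun t := by
      filter_upwards [inter_mem_nhdsWithin (Ici (0:ℝ)) (Iio_mem_nhds one_pos)] with t ht
      exact identity t ht.1 ht.2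
    exact hsum.congr_of_eventuallyEq heq (identity 0 le_rfl one_pos)
  -- tail splitting helper
  have hsplit : ∀ L : ℝ, 0 ≤ L → (∀ r, L < r → Wc (F r) = 0) →
      ∫ r in Ioi (0:ℝ), Wc (F r) * (F r - ind r) = ∫ r in Ioc (0:ℝ) L, Wc (F r) * (F r - ind r) := by
    intro L hL hz
    have hIntOn : IntegrableOn (fun r => Wc (F r) * (F r - ind r)) (Ioc 0 L) volume :=
      hbddInt _ B hDmeas hDbd 0 L
    have hzero : ∀ r ∈ Ioi L, Wc (F r) * (F r - ind r) = (0:ℝ) := by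
      intro r hr
      rw [hz r hr, zero_mul]
    have hIntTail : IntegrableOn (fun r => Wc (F r) * (F r - ind r)) (Ioi L) volume := by
      refine (integrableOn_zero (s := Ioi L)).congr_fun ?_ measurableSet_Ioi
      intro r hr
      exact (hzero r hr).symm
    rw [← Ioc_union_Ioi_eq_Ioi hL,
      setIntegral_union (Ioc_disjoint_Ioi le_rfl) measurableSet_Ioi hIntOn hIntTail]
    rw [setIntegral_congr_fun measurableSet_Ioi hzero]
    simp
  have hzeroM : ∀ r, M < r → Wc (F r) = 0 := by
    intro r hr
    exact hWc_zero _ (le_trans hMζ (cdf_mono ρ hr.le))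
  have hDD : (∫ r in Ioi (0:ℝ), W (F r) * (F r - ind r)) = D := by
    have h1 : (fun r => W (F r) * (F r - ind r)) = fun r => Wc (F r) * (F r - ind r) := by
      funext r
      rw [hWc_cdf ρ r (cdf_le_one ρ r)]
    rw [h1, hsplit M h0M hzeroM, hD]
  constructor
  · rw [hDD]; exact hfinal
  · -- part 2
    set q := quant ρ ζ with hq
    have hSne : ({r : ℝ | 0 ≤ r ∧ ζ ≤ cdf ρ r}).Nonempty := ⟨M, h0M, hMζ⟩
    have hq0 : 0 ≤ q := le_csInf hSne (fun b hb => hb.1)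
    have hFq : ∀ r, q < r → ζ ≤ F r := by
      intro r hr
      obtain ⟨s, hs, hsr⟩ := exists_lt_of_csInf_lt hSne hr
      exact le_trans hs.2 (cdf_mono ρ hsr.le)
    have hzeroq : ∀ r, q < r → Wc (F r) = 0 := fun r hr => hWc_zero _ (hFq r hr)
    have h1 : (fun r => W (F r) * (F r - ind r)) = fun r => Wc (F r) * (F r - ind r) := by
      funext r
      rw [hWc_cdf ρ r (cdf_le_one ρ r)]
    rw [h1, hsplit q hq0 hzeroq]
    have hmeas2 : Measurable fun x => Wc (F x) * F x :=
      (hWc.measurable.comp (cdf_measurable ρ)).mul (cdf_measurable ρ)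
    have hbd2 : ∀ x, |Wc (F x) * F x| ≤ B := by
      intro x
      rw [abs_mul]
      nlinarith [hWc_bd (F x), habsF x, abs_nonneg (Wc (F x)), abs_nonneg (F x)]
    have hmono2 : ∫ r in Ioc (0:ℝ) q, Wc (F r) * (F r - ind r) ≤
        ∫ r in Ioc (0:ℝ) q, Wc (F r) * F r := by
      refine setIntegral_mono_on (hbddInt _ B hDmeas hDbd 0 q) (hbddInt _ B hmeas2 hbd2 0 q)
        measurableSet_Ioc (fun x hx => ?_)
      have : F x - ind x ≤ F x := by linarith [(hind01 x).1]
      exact mul_le_mul_of_nonneg_left this (hWc_nn _)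
    refine le_trans hmono2 ?_
    rw [intervalIntegral.integral_of_le hq0]
    refine le_of_eq (setIntegral_congr_fun measurableSet_Ioc (fun x hx => ?_))
    rw [hWc_cdf ρ x (cdf_le_one ρ x)]
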